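/- (Latimer–MacDuffee) Let f ∈ ℤ[T] be monic irreducible of degree n with root α. There is a bijection between the ideal class monoid ICM(ℤ[α]) (fractional ℤ[α]-ideals modulo multiplication by elements of K*) and the set of GL_n(ℤ)-conjugacy classes of integer matrices with characteristic polynomial f. -/

import Mathlib

set_option synthInstance.maxHeartbeats 1000000
set_option maxHeartbeats 1000000

open Polynomial Matrix Module Submodule Set

namespace LMD

variable {K : Type*} [Field K] {n : ℕ}

/-- eigenvector condition: `α * v i = ∑ j, A j i * v j`. -/
def Eig (α : K) (A : Matrix (Fin n) (Fin n) ℤ) (v : Fin n → K) : Prop :=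
  ∀ i, α * v i = ∑ j, (A j i : K) * v j

lemma intCast_mul_eq_smul (z : ℤ) (x : K) : (z : K) * x = z • x := (zsmul_eq_mul x z).symm

lemma ratCast_smul_eq [NumberField K] (z : ℤ) (x : K) : ((z : ℚ)) • x = (z : K) * x := by
  rw [Algebra.smul_def, map_intCast]

theorem wtop [NumberField K] (α : K) (hgen : Algebra.adjoin ℚ ({α} : Set K) = ⊤)
    (W : Submodule ℚ K) (hW : ∀ w ∈ W, α * w ∈ W)
    {w₀ : K} (hw₀ : w₀ ∈ W) (h0 : w₀ ≠ 0) : W = ⊤ := by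
  have hmul : ∀ y : K, ∀ w ∈ W, y * w ∈ W := by
    intro y
    have hy : y ∈ Algebra.adjoin ℚ ({α} : Set K) := by rw [hgen]; trivial
    induction hy using Algebra.adjoin_induction with
    | mem x hx =>
      have hxα : x = α := hx
      subst hxα; exact hW
    | algebraMap r =>
      intro w hw
      rw [← Algebra.smul_def]
      exact W.smul_mem r hw
    | add x y hx hy ihx ihy =>
      intro w hw
      rw [add_mul]; exact W.add_mem (ihx w hw) (ihy w hw)
    | mul x y hx hy ihx ihy =>
      intro w hw
      rw [mul_assoc]; exact ihx _ (ihy w hw)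
  ext z
  simp only [Submodule.mem_top, iff_true]
  have h := hmul (z * w₀⁻¹) w₀ hw₀
  rwa [mul_assoc, inv_mul_cancel₀ h0, mul_one] at h

theorem mul_left_of_commute [NumberField K] (α : K)
    (hgen : Algebra.adjoin ℚ ({α} : Set K) = ⊤)
    (g : K →ₗ[ℚ] K) (hg : ∀ z, g (α * z) = α * g z) :
    ∀ y z : K, g (y * z) = y * g z := by
  intro y
  have hy : y ∈ Algebra.adjoin ℚ ({α} : Set K) := by rw [hgen]; trivial
  induction hy using Algebra.adjoin_induction with
  | mem x hx =>
    have hxα : x = α := hx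
    subst hxα; exact hg
  | algebraMap r =>
    intro z
    rw [← Algebra.smul_def, ← Algebra.smul_def]
    exact g.map_smul r z
  | add x y hx hy ihx ihy =>
    intro z
    rw [add_mul, map_add, ihx z, ihy z, add_mul]
  | mul x y hx hy ihx ihy =>
    intro z
    rw [mul_assoc, ihx, ihy, mul_assoc]

theorem span_int (α : K) (v : Fin n → K)
    (hv : ∀ i, α * v i ∈ span ℤ (Set.range v)) :
    ((span (Algebra.adjoin ℤ ({α} : Set K)) (Set.range v) : Submodule _ K) : Set K)
      = (span ℤ (Set.range v) : Set K) := by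
  have halpha : ∀ x ∈ span ℤ (Set.range v), α * x ∈ span ℤ (Set.range v) := by
    intro x hx
    induction hx using Submodule.span_induction with
    | mem y hy => obtain ⟨i, rfl⟩ := hy; exact hv i
    | zero => rw [mul_zero]; exact zero_mem _
    | add x y hx hy ihx ihy => rw [mul_add]; exact add_mem ihx ihy
    | smul z x hx ih => rw [mul_smul_comm]; exact Submodule.smul_mem _ z ih
  have hmul : ∀ y ∈ Algebra.adjoin ℤ ({α} : Set K), ∀ x ∈ span ℤ (Set.range v),
      y * x ∈ span ℤ (Set.range v) := by
    intro y hy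
    induction hy using Algebra.adjoin_induction with
    | mem x hx =>
      have hxα : x = α := hx
      subst hxα; exact halpha
    | algebraMap r =>
      intro x hx
      have : (algebraMap ℤ K r) * x = r • x := by
        rw [algebraMap_int_eq, eq_intCast, intCast_mul_eq_smul]
      rw [this]; exact Submodule.smul_mem _ r hx
    | add x y hx hy ihx ihy =>
      intro w hw
      rw [add_mul]; exact add_mem (ihx w hw) (ihy w hw)
    | mul x y hx hy ihx ihy =>
      intro w hw
      rw [mul_assoc]; exact ihx _ (ihy w hw)
  apply Set.Subset.antisymm
  · intro x hx
    let N : Submodule (Algebra.adjoin ℤ ({α} : Set K)) K :=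
      { carrier := (span ℤ (Set.range v) : Set K)
        add_mem' := fun ha hb => add_mem ha hb
        zero_mem' := zero_mem _
        smul_mem' := fun r x hx => by
          have h := hmul (r : K) r.2 x hx
          simpa [Subalgebra.smul_def, smul_eq_mul] using h }
    have hle : span (Algebra.adjoin ℤ ({α} : Set K)) (Set.range v) ≤ N :=
      Submodule.span_le.mpr Submodule.subset_span
    exact hle hx
  · intro x hx
    exact Submodule.span_le_restrictScalars ℤ _ _ hx

end LMD

namespace LMD

variable {K : Type*} [Field K] {n : ℕ}

theorem eig_mem_intSpan {α : K} {A : Matrix (Fin n) (Fin n) ℤ} {v : Fin n → K}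
    (hv : Eig α A v) (i : Fin n) : α * v i ∈ span ℤ (Set.range v) := by
  rw [hv i]
  exact sum_mem fun j _ => by
    rw [intCast_mul_eq_smul]
    exact Submodule.smul_mem _ _ (Submodule.subset_span ⟨j, rfl⟩)

theorem eig_li [NumberField K] (α : K) (hgen : Algebra.adjoin ℚ ({α} : Set K) = ⊤)
    (hdim : Module.finrank ℚ K = n)
    {A : Matrix (Fin n) (Fin n) ℤ} {v : Fin n → K} (hv : Eig α A v) (h0 : v ≠ 0) :
    LinearIndependent ℚ v ∧ span ℚ (Set.range v) = ⊤ := by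
  obtain ⟨i0, hi0⟩ : ∃ i, v i ≠ 0 := by
    by_contra h; push_neg at h; exact h0 (funext h)
  have hstab : ∀ w ∈ span ℚ (Set.range v), α * w ∈ span ℚ (Set.range v) := by
    intro w hw
    induction hw using Submodule.span_induction with
    | mem y hy =>
      obtain ⟨i, rfl⟩ := hy
      rw [hv i]
      exact sum_mem fun j _ => by
        rw [← ratCast_smul_eq]
        exact Submodule.smul_mem _ _ (Submodule.subset_span ⟨j, rfl⟩)
    | zero => rw [mul_zero]; exact zero_mem _
    | add x y hx hy ihx ihy => rw [mul_add]; exact add_mem ihx ihy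
    | smul q x hx ih => rw [mul_smul_comm]; exact Submodule.smul_mem _ q ih
  have htop : span ℚ (Set.range v) = ⊤ :=
    wtop α hgen _ hstab (Submodule.subset_span ⟨i0, rfl⟩) hi0
  refine ⟨?_, htop⟩
  exact linearIndependent_of_top_le_span_of_card_eq_finrank (htop ▸ le_rfl) (by simp [hdim])

theorem coeff_unique {v : Fin n → K} [NumberField K] (hli : LinearIndependent ℚ v)
    {c d : Fin n → ℤ}
    (h : ∑ j, (c j : K) * v j = ∑ j, (d j : K) * v j) : c = d := by
  have h2 : ∑ j, (((c j : ℚ) - (d j : ℚ))) • v j = 0 := by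
    simp only [sub_smul, Finset.sum_sub_distrib, ratCast_smul_eq, h, sub_self]
  have h3 := Fintype.linearIndependent_iff.mp hli _ h2
  funext j
  exact_mod_cast sub_eq_zero.mp (h3 j)

theorem comp_sum {v : Fin n → K} (Q P : Matrix (Fin n) (Fin n) ℤ) (u : Fin n → K)
    (hu : ∀ i, u i = ∑ j, (P i j : K) * v j) (i : Fin n) :
    ∑ j, (Q i j : K) * u j = ∑ k, (((Q * P) i k : ℤ) : K) * v k := by
  simp only [hu, Finset.mul_sum, Matrix.mul_apply]
  rw [Finset.sum_comm]
  refine Finset.sum_congr rfl fun k _ => ?_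
  push_cast
  rw [Finset.sum_mul]
  exact Finset.sum_congr rfl fun j _ => by ring

theorem one_expand (u : Fin n → K) (i : Fin n) :
    ∑ k, (((1 : Matrix (Fin n) (Fin n) ℤ) i k : ℤ) : K) * u k = u i := by
  rw [Finset.sum_eq_single i]
  · simp [Matrix.one_apply]
  · intro k _ hk
    simp [Matrix.one_apply, Ne.symm hk]
  · intro hi; exact absurd (Finset.mem_univ i) hi

theorem eig_smul {α : K} {A : Matrix (Fin n) (Fin n) ℤ} {v : Fin n → K}
    (hv : Eig α A v) (x : K) : Eig α A (fun i => x * v i) := by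
  intro i
  simp only
  rw [mul_left_comm, hv i, Finset.mul_sum]
  exact Finset.sum_congr rfl fun j _ => by ring

theorem eig_prop [NumberField K] (α : K) (hgen : Algebra.adjoin ℚ ({α} : Set K) = ⊤)
    (hdim : Module.finrank ℚ K = n)
    {A : Matrix (Fin n) (Fin n) ℤ} {v w : Fin n → K}
    (hv : Eig α A v) (hw : Eig α A w) (h0 : v ≠ 0) :
    ∃ x : K, ∀ i, w i = x * v i := by
  obtain ⟨hli, htop⟩ := eig_li α hgen hdim hv h0
  let bv : Basis (Fin n) ℚ K := Basis.mk hli (htop ▸ le_rfl)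
  have hbv : ∀ i, bv i = v i := fun i => Basis.mk_apply hli _ i
  let g : K →ₗ[ℚ] K := bv.constr ℚ w
  have hgb : ∀ i, g (v i) = w i := fun i => by
    rw [← hbv]; exact bv.constr_basis ℚ w i
  have hcomm : ∀ z, g (α * z) = α * g z := by
    have hext : g ∘ₗ LinearMap.mulLeft ℚ α = LinearMap.mulLeft ℚ α ∘ₗ g := by
      apply bv.ext
      intro i
      simp only [LinearMap.comp_apply, LinearMap.mulLeft_apply]
      rw [hbv i, hgb i, hv i, hw i]
      have e1 : (∑ j, (A j i : K) * v j) = ∑ j, ((A j i : ℚ)) • v j := by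
        simp [ratCast_smul_eq]
      rw [e1, map_sum]
      simp only [_root_.map_smul, hgb]
      simp [ratCast_smul_eq]
    intro z
    have := LinearMap.congr_fun hext z
    simpa using this
  have hyz := mul_left_of_commute α hgen g hcomm
  refine ⟨g 1, fun i => ?_⟩
  have h1 := hyz (v i) 1
  rw [mul_one] at h1
  rw [← hgb i, h1, mul_comm]

end LMD

namespace LMD

variable {K : Type*} [Field K] {n : ℕ}

theorem eig_transport (α : K) {A A' U V : Matrix (Fin n) (Fin n) ℤ}
    (hUV : U * V = 1) (hVU : V * U = 1) (hA' : A' = U * A * V)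
    {v : Fin n → K} (hv : Eig α A v) (h0 : v ≠ 0) :
    ∃ w : Fin n → K, Eig α A' w ∧ w ≠ 0 ∧
      span (Algebra.adjoin ℤ ({α} : Set K)) (Set.range w)
        = span (Algebra.adjoin ℤ ({α} : Set K)) (Set.range v) := by
  refine ⟨fun i => ∑ j, (Vᵀ i j : K) * v j, ?_, ?_, ?_⟩
  · intro i
    have e1 : ∀ j, α * v j = ∑ k, ((Aᵀ) j k : K) * v k := by
      intro j; rw [hv j]
      exact Finset.sum_congr rfl fun k _ => by rw [Matrix.transpose_apply]
    have h1 : ∑ j, (Vᵀ i j : K) * (α * v j) = ∑ k, ((Vᵀ * Aᵀ) i k : K) * v k :=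
      comp_sum Vᵀ Aᵀ _ e1 i
    have h2 : ∑ j, ((A'ᵀ) i j : K) * (∑ k, (Vᵀ j k : K) * v k)
        = ∑ k, ((A'ᵀ * Vᵀ) i k : K) * v k :=
      comp_sum A'ᵀ Vᵀ _ (fun _ => rfl) i
    have hmat : Vᵀ * Aᵀ = A'ᵀ * Vᵀ := by
      rw [← Matrix.transpose_mul, ← Matrix.transpose_mul]
      congr 1
      rw [hA', ← mul_assoc, ← mul_assoc, hVU, one_mul]
    calc α * ∑ j, (Vᵀ i j : K) * v j = ∑ j, (Vᵀ i j : K) * (α * v j) := by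
          rw [Finset.mul_sum]; exact Finset.sum_congr rfl fun j _ => by ring
      _ = ∑ k, ((Vᵀ * Aᵀ) i k : K) * v k := h1
      _ = ∑ k, ((A'ᵀ * Vᵀ) i k : K) * v k := by rw [hmat]
      _ = ∑ j, ((A'ᵀ) i j : K) * (∑ k, (Vᵀ j k : K) * v k) := h2.symm
      _ = ∑ j, ((A' j i : K)) * (∑ k, (Vᵀ j k : K) * v k) := by
          exact Finset.sum_congr rfl fun j _ => by rw [Matrix.transpose_apply]
  · intro hw
    apply h0
    funext i
    simp only [Pi.zero_apply]
    have h3 : ∑ j, (Uᵀ i j : K) * (∑ k, (Vᵀ j k : K) * v k)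
        = ∑ k, ((Uᵀ * Vᵀ) i k : K) * v k := comp_sum Uᵀ Vᵀ _ (fun _ => rfl) i
    have h4 : Uᵀ * Vᵀ = 1 := by rw [← Matrix.transpose_mul, hVU, Matrix.transpose_one]
    have h5 : ∀ j, ∑ k, (Vᵀ j k : K) * v k = 0 := fun j => by simpa using congrFun hw j
    calc v i = ∑ k, ((Uᵀ * Vᵀ) i k : K) * v k := by rw [h4, one_expand]
      _ = ∑ j, (Uᵀ i j : K) * (∑ k, (Vᵀ j k : K) * v k) := h3.symm
      _ = 0 := by
          apply Finset.sum_eq_zero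
          intro j _
          rw [h5 j, mul_zero]
  · apply le_antisymm
    · rw [Submodule.span_le]
      rintro _ ⟨i, rfl⟩
      simp only [SetLike.mem_coe]
      refine sum_mem fun j _ => ?_
      have hin : v j ∈ span (Algebra.adjoin ℤ ({α} : Set K)) (Set.range v) :=
        Submodule.subset_span ⟨j, rfl⟩
      rw [intCast_mul_eq_smul]
      exact zsmul_mem hin _
    · rw [Submodule.span_le]
      rintro _ ⟨i, rfl⟩
      simp only [SetLike.mem_coe]
      have h3 : ∑ j, (Uᵀ i j : K) * (∑ k, (Vᵀ j k : K) * v k)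
          = ∑ k, ((Uᵀ * Vᵀ) i k : K) * v k := comp_sum Uᵀ Vᵀ _ (fun _ => rfl) i
      have h4 : Uᵀ * Vᵀ = 1 := by rw [← Matrix.transpose_mul, hVU, Matrix.transpose_one]
      have h6 : v i = ∑ j, (Uᵀ i j : K) * (∑ k, (Vᵀ j k : K) * v k) := by
        rw [h3, h4, one_expand]
      rw [h6]
      refine sum_mem fun j _ => ?_
      have hin : (∑ k, (Vᵀ j k : K) * v k) ∈
          span (Algebra.adjoin ℤ ({α} : Set K)) (Set.range fun i => ∑ j, (Vᵀ i j : K) * v j) :=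
        Submodule.subset_span ⟨j, rfl⟩
      rw [intCast_mul_eq_smul]
      exact zsmul_mem hin _

theorem conj_of_span_eq [NumberField K] (α : K)
    (hgen : Algebra.adjoin ℚ ({α} : Set K) = ⊤) (hdim : Module.finrank ℚ K = n)
    {A A' : Matrix (Fin n) (Fin n) ℤ} {v v' : Fin n → K}
    (hv : Eig α A v) (hv' : Eig α A' v') (h0 : v ≠ 0) (h0' : v' ≠ 0)
    (hsp : span (Algebra.adjoin ℤ ({α} : Set K)) (Set.range v)
      = span (Algebra.adjoin ℤ ({α} : Set K)) (Set.range v')) :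
    ∃ U V : Matrix (Fin n) (Fin n) ℤ, U * V = 1 ∧ V * U = 1 ∧ A' = U * A * V := by
  have hZ : (span ℤ (Set.range v) : Set K) = (span ℤ (Set.range v') : Set K) := by
    rw [← span_int α v (eig_mem_intSpan hv), ← span_int α v' (eig_mem_intSpan hv'), hsp]
  obtain ⟨hliv, -⟩ := eig_li α hgen hdim hv h0
  obtain ⟨hliv', -⟩ := eig_li α hgen hdim hv' h0'
  -- v' in terms of v
  have hv'mem : ∀ i, v' i ∈ span ℤ (Set.range v) := fun i => by
    have : v' i ∈ (span ℤ (Set.range v') : Set K) := Submodule.subset_span ⟨i, rfl⟩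
    rw [← hZ] at this; exact this
  have hvmem : ∀ i, v i ∈ span ℤ (Set.range v') := fun i => by
    have : v i ∈ (span ℤ (Set.range v) : Set K) := Submodule.subset_span ⟨i, rfl⟩
    rw [hZ] at this; exact this
  have hN0 : ∀ i, ∃ c : Fin n → ℤ, ∑ j, c j • v j = v' i := fun i =>
    (mem_span_range_iff_exists_fun ℤ).mp (hv'mem i)
  have hM0 : ∀ i, ∃ c : Fin n → ℤ, ∑ j, c j • v' j = v i := fun i =>
    (mem_span_range_iff_exists_fun ℤ).mp (hvmem i)
  choose N hN using hN0
  choose M hM using hM0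
  have hN' : ∀ i, v' i = ∑ j, ((Matrix.of N) i j : K) * v j := fun i => by
    rw [← hN i]
    exact Finset.sum_congr rfl fun j _ => (intCast_mul_eq_smul _ _).symm
  have hM' : ∀ i, v i = ∑ j, ((Matrix.of M) i j : K) * v' j := fun i => by
    rw [← hM i]
    exact Finset.sum_congr rfl fun j _ => (intCast_mul_eq_smul _ _).symm
  -- products are identity
  have hMN : Matrix.of M * Matrix.of N = 1 := by
    ext i k
    have h1 : ∑ j, ((Matrix.of M) i j : K) * v' j
        = ∑ k, ((Matrix.of M * Matrix.of N) i k : K) * v k := comp_sum _ _ _ hN' i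
    have h2 : ∑ k, ((Matrix.of M * Matrix.of N) i k : K) * v k
        = ∑ k, (((1 : Matrix (Fin n) (Fin n) ℤ) i k : K)) * v k := by
      rw [← h1, ← hM' i, one_expand]
    have := coeff_unique hliv (c := fun k => (Matrix.of M * Matrix.of N) i k)
      (d := fun k => (1 : Matrix (Fin n) (Fin n) ℤ) i k) h2
    exact congrFun this k
  have hNM : Matrix.of N * Matrix.of M = 1 := by
    ext i k
    have h1 : ∑ j, ((Matrix.of N) i j : K) * v j
        = ∑ k, ((Matrix.of N * Matrix.of M) i k : K) * v' k := comp_sum _ _ _ hM' i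
    have h2 : ∑ k, ((Matrix.of N * Matrix.of M) i k : K) * v' k
        = ∑ k, (((1 : Matrix (Fin n) (Fin n) ℤ) i k : K)) * v' k := by
      rw [← h1, ← hN' i, one_expand]
    have := coeff_unique hliv' (c := fun k => (Matrix.of N * Matrix.of M) i k)
      (d := fun k => (1 : Matrix (Fin n) (Fin n) ℤ) i k) h2
    exact congrFun this k
  -- main relation : N * Aᵀ = A'ᵀ * N
  have hrel : Matrix.of N * Aᵀ = A'ᵀ * Matrix.of N := by
    ext i k
    have e1 : ∀ j, α * v j = ∑ k, ((Aᵀ) j k : K) * v k := by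
      intro j; rw [hv j]
      exact Finset.sum_congr rfl fun k _ => by rw [Matrix.transpose_apply]
    have h1 : ∑ j, ((Matrix.of N) i j : K) * (α * v j)
        = ∑ k, ((Matrix.of N * Aᵀ) i k : K) * v k := comp_sum _ _ _ e1 i
    have h2 : ∑ j, ((A'ᵀ) i j : K) * v' j
        = ∑ k, ((A'ᵀ * Matrix.of N) i k : K) * v k := comp_sum _ _ _ hN' i
    have h3 : α * v' i = ∑ j, ((Matrix.of N) i j : K) * (α * v j) := by
      rw [hN' i, Finset.mul_sum]
      exact Finset.sum_congr rfl fun j _ => by ring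
    have h4 : α * v' i = ∑ j, ((A'ᵀ) i j : K) * v' j := by
      rw [hv' i]
      exact Finset.sum_congr rfl fun j _ => by rw [Matrix.transpose_apply]
    have h5 : ∑ k, ((Matrix.of N * Aᵀ) i k : K) * v k
        = ∑ k, ((A'ᵀ * Matrix.of N) i k : K) * v k := by
      rw [← h1, ← h2, ← h3, ← h4]
    have := coeff_unique hliv (c := fun k => (Matrix.of N * Aᵀ) i k)
      (d := fun k => (A'ᵀ * Matrix.of N) i k) h5
    exact congrFun this k
  refine ⟨(Matrix.of M)ᵀ, (Matrix.of N)ᵀ, ?_, ?_, ?_⟩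
  · rw [← Matrix.transpose_mul, hNM, Matrix.transpose_one]
  · rw [← Matrix.transpose_mul, hMN, Matrix.transpose_one]
  · have h6 : A * (Matrix.of N)ᵀ = (Matrix.of N)ᵀ * A' := by
      have := congrArg Matrix.transpose hrel
      rwa [Matrix.transpose_mul, Matrix.transpose_mul, Matrix.transpose_transpose,
        Matrix.transpose_transpose] at this
    calc A' = ((Matrix.of M)ᵀ * (Matrix.of N)ᵀ) * A' := by
          rw [← Matrix.transpose_mul, hNM, Matrix.transpose_one, one_mul]
      _ = (Matrix.of M)ᵀ * ((Matrix.of N)ᵀ * A') := by rw [mul_assoc]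
      _ = (Matrix.of M)ᵀ * (A * (Matrix.of N)ᵀ) := by rw [h6]
      _ = (Matrix.of M)ᵀ * A * (Matrix.of N)ᵀ := by rw [mul_assoc]

end LMD

namespace LMD

variable {K : Type*} [Field K] {n : ℕ}

theorem eig_exists (f : Polynomial ℤ) (α : K) (hroot : Polynomial.aeval α f = 0)
    {A : Matrix (Fin n) (Fin n) ℤ} (hA : A.charpoly = f) :
    ∃ v : Fin n → K, Eig α A v ∧ v ≠ 0 := by
  classical
  set B : Matrix (Fin n) (Fin n) K := A.map (algebraMap ℤ K) with hB
  have h1 : B.charpoly = f.map (algebraMap ℤ K) := by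
    rw [hB, Matrix.charpoly_map, hA]
  have h2 : (B.charpoly).eval α = 0 := by
    rw [h1, Polynomial.eval_map, ← Polynomial.aeval_def, hroot]
  have h3 : (B.charpoly).eval α = (Matrix.scalar (Fin n) α - B).det := by
    rw [Matrix.charpoly, _root_.eval_det, matPolyEquiv_charmatrix]
    rw [Polynomial.eval_sub, Polynomial.eval_X, Polynomial.eval_C]
  have hdet : (Matrix.scalar (Fin n) α - Bᵀ).det = 0 := by
    have h4 : (Matrix.scalar (Fin n) α - Bᵀ)ᵀ = Matrix.scalar (Fin n) α - B := by
      rw [Matrix.transpose_sub, Matrix.transpose_transpose, Matrix.scalar_apply,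
        Matrix.diagonal_transpose]
    rw [← Matrix.det_transpose, h4, ← h3, h2]
  obtain ⟨v, hv0, hveq⟩ := (Matrix.exists_mulVec_eq_zero_iff).mpr hdet
  refine ⟨v, ?_, hv0⟩
  intro i
  have h5 := congrFun hveq i
  rw [Matrix.sub_mulVec] at h5
  have h6 : ((Matrix.scalar (Fin n) α) *ᵥ v) i = α * v i := by
    rw [Matrix.scalar_apply, Matrix.mulVec_diagonal]
  have h7 : (Bᵀ *ᵥ v) i = ∑ j, (A j i : K) * v j := by
    simp only [Matrix.mulVec, dotProduct, Matrix.transpose_apply, hB,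
      Matrix.map_apply, algebraMap_int_eq, eq_intCast]
  have h8 : α * v i - ∑ j, (A j i : K) * v j = 0 := by
    rw [← h6, ← h7]; exact h5
  exact sub_eq_zero.mp h8

end LMD

namespace LMD

variable {K : Type*} [Field K] {n : ℕ}

theorem basis_span (α : K) (a : Submodule (Algebra.adjoin ℤ ({α} : Set K)) K)
    {ι : Type*} (bs : Basis ι ℤ a) :
    a = span (Algebra.adjoin ℤ ({α} : Set K)) (Set.range fun i => (bs i : K)) := by
  apply le_antisymm
  · intro y hy
    have h1 : (⟨y, hy⟩ : a) ∈ span ℤ (Set.range bs) := by rw [bs.span_eq]; trivial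
    have h2 := Submodule.apply_mem_span_image_of_mem_span
      (a.subtype.restrictScalars ℤ) h1
    rw [← Set.range_comp] at h2
    exact Submodule.span_le_restrictScalars ℤ _ _ h2
  · rw [Submodule.span_le]
    rintro _ ⟨i, rfl⟩
    exact (bs i).2

theorem mem_int_span_basis (α : K) (a : Submodule (Algebra.adjoin ℤ ({α} : Set K)) K)
    {ι : Type*} (bs : Basis ι ℤ a) {y : K} (hy : y ∈ a) :
    y ∈ span ℤ (Set.range fun i => (bs i : K)) := by
  have h1 : (⟨y, hy⟩ : a) ∈ span ℤ (Set.range bs) := by rw [bs.span_eq]; trivial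
  have h2 := Submodule.apply_mem_span_image_of_mem_span
    (a.subtype.restrictScalars ℤ) h1
  rw [← Set.range_comp] at h2
  exact h2

theorem basis_v_ne_zero (α : K) (a : Submodule (Algebra.adjoin ℤ ({α} : Set K)) K)
    {ι : Type*} (bs : Basis ι ℤ a) (hne : a ≠ ⊥) :
    (fun i => (bs i : K)) ≠ 0 := by
  intro h
  apply hne
  rw [basis_span α a bs, Submodule.span_eq_bot]
  rintro _ ⟨i, rfl⟩
  exact congrFun h i

theorem alpha_smul_mem (α : K) (a : Submodule (Algebra.adjoin ℤ ({α} : Set K)) K)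
    {y : K} (hy : y ∈ a) : α * y ∈ a := by
  have h := a.smul_mem (⟨α, Algebra.self_mem_adjoin_singleton ℤ α⟩ :
    Algebra.adjoin ℤ ({α} : Set K)) hy
  rwa [Subalgebra.smul_def, smul_eq_mul] at h

theorem exists_eig_of_submodule [NumberField K] (f : Polynomial ℤ) (α : K)
    (hn : f.natDegree = n) (hmonic : f.Monic) (hirr : Irreducible f)
    (hroot : Polynomial.aeval α f = 0)
    (hgen : Algebra.adjoin ℚ ({α} : Set K) = ⊤) (hdim : Module.finrank ℚ K = n)
    (a : Submodule (Algebra.adjoin ℤ ({α} : Set K)) K) (hne : a ≠ ⊥) (hfg : a.FG) :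
    ∃ (A : Matrix (Fin n) (Fin n) ℤ) (v : Fin n → K),
      A.charpoly = f ∧ Eig α A v ∧ v ≠ 0 ∧
        a = span (Algebra.adjoin ℤ ({α} : Set K)) (Set.range v) := by
  classical
  have hint : IsIntegral ℤ α := ⟨f, hmonic, by rwa [← Polynomial.aeval_def]⟩
  haveI hfin1 : Module.Finite ℤ (Algebra.adjoin ℤ ({α} : Set K)) :=
    ⟨(Submodule.fg_top _).mpr hint.fg_adjoin_singleton⟩
  haveI hfin2 : Module.Finite (Algebra.adjoin ℤ ({α} : Set K)) a :=
    Module.Finite.iff_fg.mpr hfg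
  haveI hfin3 : Module.Finite ℤ a :=
    Module.Finite.trans (Algebra.adjoin ℤ ({α} : Set K)) a
  haveI hnzsd : NoZeroSMulDivisors ℤ a := by
    constructor
    rintro c ⟨x, hx⟩ h
    have h1 : c • x = 0 := by
      have := congrArg (Subtype.val) h
      simpa using this
    rw [← intCast_mul_eq_smul] at h1
    rcases mul_eq_zero.mp h1 with h2 | h2
    · exact Or.inl (by exact_mod_cast h2)
    · exact Or.inr (by ext; simpa using h2)
  haveI hfree : Module.Free ℤ a := Module.free_of_finite_type_torsion_free'
  set ι := Module.Free.ChooseBasisIndex ℤ a with hι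
  let b0 : Basis ι ℤ a := Module.Free.chooseBasis ℤ a
  let v0 : ι → K := fun i => (b0 i : K)
  have hli0 : LinearIndependent ℤ v0 := by
    have := b0.linearIndependent
    have h2 := this.map' (a.subtype.restrictScalars ℤ)
      (LinearMap.ker_eq_bot_of_injective Subtype.val_injective)
    exact h2
  have hliQ : LinearIndependent ℚ v0 := (LinearIndependent.iff_fractionRing ℤ ℚ).mp hli0
  have hsub : ∀ y ∈ a, y ∈ span ℤ (Set.range v0) := fun y hy =>
    mem_int_span_basis α a b0 hy
  obtain ⟨w₀, hw₀a, hw₀⟩ := (Submodule.ne_bot_iff a).mp hne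
  have hZQ : (span ℤ (Set.range v0) : Set K) ⊆ (span ℚ (Set.range v0) : Set K) :=
    fun x hx => Submodule.span_le_restrictScalars ℤ ℚ _ hx
  have htop : span ℚ (Set.range v0) = ⊤ := by
    apply wtop α hgen _ _ (hZQ (hsub w₀ hw₀a)) hw₀
    intro w hw
    induction hw using Submodule.span_induction with
    | mem y hy =>
      obtain ⟨i, rfl⟩ := hy
      exact hZQ (hsub _ (alpha_smul_mem α a (b0 i).2))
    | zero => rw [mul_zero]; exact zero_mem _
    | add x y hx hy ihx ihy => rw [mul_add]; exact add_mem ihx ihy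
    | smul q x hx ih => rw [mul_smul_comm]; exact Submodule.smul_mem _ q ih
  haveI : Fintype ι := Module.Free.ChooseBasisIndex.fintype ℤ a
  let bK : Basis ι ℚ K := Basis.mk hliQ (htop ▸ le_rfl)
  have hcard : Fintype.card ι = n := by rw [← Module.finrank_eq_card_basis bK, hdim]
  let e : ι ≃ Fin n := Fintype.equivFinOfCardEq hcard
  let b : Basis (Fin n) ℤ a := b0.reindex e
  have hmem : ∀ j : Fin n, α * (b j : K) ∈ a := fun j => alpha_smul_mem α a (b j).2
  let A : Matrix (Fin n) (Fin n) ℤ :=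
    Matrix.of fun i j => b.repr ⟨α * (b j : K), hmem j⟩ i
  let v : Fin n → K := fun i => (b i : K)
  have hEig : Eig α A v := by
    intro i
    have hr := b.sum_repr ⟨α * (b i : K), hmem i⟩
    have hc := congrArg (Subtype.val) hr
    rw [AddSubmonoidClass.coe_finset_sum] at hc
    simp only [SetLike.val_smul] at hc
    calc α * v i = ∑ j, (b.repr ⟨α * (b i : K), hmem i⟩ j) • (b j : K) := hc.symm
      _ = ∑ j, (A j i : K) * v j := by
          refine Finset.sum_congr rfl fun j _ => ?_
          rw [intCast_mul_eq_smul]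
          rfl
  have hv0 : v ≠ 0 := basis_v_ne_zero α a b hne
  have hspan : a = span (Algebra.adjoin ℤ ({α} : Set K)) (Set.range v) :=
    basis_span α a b
  -- charpoly
  have hAcp : A.charpoly = f := by
    let bQ : Basis (Fin n) ℚ K := bK.reindex e
    have hbQ : ∀ i, bQ i = v i := fun i => by
      simp only [bQ, Basis.reindex_apply, bK, Basis.mk_apply, v, b, v0]
    let L : Module.End ℚ K := (Algebra.lmul ℚ K) α
    have hLM : LinearMap.toMatrix bQ bQ L = A.map (algebraMap ℤ ℚ) := by
      ext i j
      rw [LinearMap.toMatrix_apply]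
      have h1 : L (bQ j) = ∑ k, ((A k j : ℚ)) • bQ k := by
        have h2 : L (bQ j) = α * v j := by rw [hbQ j]; rfl
        rw [h2, hEig j]
        refine Finset.sum_congr rfl fun k _ => ?_
        rw [hbQ k, ratCast_smul_eq]
      rw [h1]
      rw [Basis.repr_sum_self]
      simp [Matrix.map_apply]
    have hcp1 : (A.map (algebraMap ℤ ℚ)).charpoly = L.charpoly := by
      rw [← hLM]; exact LinearMap.charpoly_toMatrix L bQ
    have hfQmonic : (f.map (algebraMap ℤ ℚ)).Monic := hmonic.map _
    have hfQirr : Irreducible (f.map (algebraMap ℤ ℚ)) := by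
      rw [algebraMap_int_eq]
      exact (Polynomial.IsPrimitive.Int.irreducible_iff_irreducible_map_cast
        hmonic.isPrimitive).mp hirr
    have hmin : minpoly ℚ α = f.map (algebraMap ℤ ℚ) :=
      (minpoly.eq_of_irreducible_of_monic hfQirr
        (by rw [Polynomial.aeval_map_algebraMap]; exact hroot) hfQmonic).symm
    have hdvd : f.map (algebraMap ℤ ℚ) ∣ L.charpoly := by
      rw [← hmin]
      apply minpoly.dvd
      have hC := LinearMap.aeval_self_charpoly L
      have h9 : Polynomial.aeval L L.charpoly
          = (Algebra.lmul ℚ K) (Polynomial.aeval α L.charpoly) :=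
        Polynomial.aeval_algHom_apply (Algebra.lmul ℚ K) α L.charpoly
      have h10 : (Algebra.lmul ℚ K) (Polynomial.aeval α L.charpoly) = 0 := by
        rw [← h9, hC]
      have h11 := congrArg (fun t : Module.End ℚ K => t 1) h10
      simpa using h11
    have hdeg : L.charpoly.natDegree = (f.map (algebraMap ℤ ℚ)).natDegree := by
      rw [LinearMap.charpoly_natDegree, hdim, hmonic.natDegree_map, hn]
    have hcpL : L.charpoly = f.map (algebraMap ℤ ℚ) := by
      obtain ⟨c, hc⟩ := hdvd
      have hfne : (f.map (algebraMap ℤ ℚ)) ≠ 0 := hfQmonic.ne_zero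
      have hcne : c ≠ 0 := by
        rintro rfl
        rw [mul_zero] at hc
        exact (LinearMap.charpoly_monic L).ne_zero hc
      have hdc : c.natDegree = 0 := by
        have h12 := Polynomial.natDegree_mul hfne hcne
        rw [← hc, hdeg] at h12
        omega
      have hc0 : c = Polynomial.C (c.coeff 0) := Polynomial.eq_C_of_natDegree_eq_zero hdc
      have hlc : c.coeff 0 = 1 := by
        have h4 := congrArg Polynomial.leadingCoeff hc
        rw [Polynomial.leadingCoeff_mul, hfQmonic.leadingCoeff,
          (LinearMap.charpoly_monic L).leadingCoeff, one_mul] at h4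
        rw [Polynomial.leadingCoeff, hdc] at h4
        exact h4.symm
      rw [hc, hc0, hlc, Polynomial.C_1, mul_one]
    have hfinal : (A.charpoly).map (algebraMap ℤ ℚ) = f.map (algebraMap ℤ ℚ) := by
      rw [← Matrix.charpoly_map, hcp1, hcpL]
    have hinj : Function.Injective (algebraMap ℤ ℚ) := fun x y h => by
      rw [algebraMap_int_eq, eq_intCast, eq_intCast] at h
      exact_mod_cast h
    exact Polynomial.map_injective _ hinj hfinal
  exact ⟨A, v, hAcp, hEig, hv0, hspan⟩

end LMD

set_option synthInstance.maxHeartbeats 1000000 in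
/-- Latimer–MacDuffee: there is a bijection between the ideal class monoid of `ℤ[α]`
(fractional `ℤ[α]`-ideals up to multiplication by `K*`) and `GL_n(ℤ)`-conjugacy classes
of integer matrices with characteristic polynomial `f`, sending the class of `𝔞` to
the class of the matrix of multiplication by `α` on `𝔞` in a `ℤ`-basis. -/
theorem latimer_macduffee {K : Type*} [Field K] [NumberField K]
    (f : Polynomial ℤ) (n : ℕ) (hn : f.natDegree = n) (hmonic : f.Monic)
    (hirr : Irreducible f) (α : K) (hroot : Polynomial.aeval α f = 0)
    (hgen : Algebra.adjoin ℚ ({α} : Set K) = ⊤)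
    (hdim : Module.finrank ℚ K = n) :
    ∃ e : Quot (fun (a b : {a : Submodule (Algebra.adjoin ℤ ({α} : Set K)) K // a ≠ ⊥ ∧ a.FG}) =>
            ∃ x : K, x ≠ 0 ∧ ((b : Submodule (Algebra.adjoin ℤ ({α} : Set K)) K) : Set K) =
              (fun y => x * y) '' ((a : Submodule (Algebra.adjoin ℤ ({α} : Set K)) K) : Set K)) ≃
          Quot (fun (A B : {A : Matrix (Fin n) (Fin n) ℤ // A.charpoly = f}) =>
            ∃ U V : Matrix (Fin n) (Fin n) ℤ, U * V = 1 ∧ V * U = 1 ∧ (B : Matrix (Fin n) (Fin n) ℤ) = U * A * V),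
      ∀ (a : {a : Submodule (Algebra.adjoin ℤ ({α} : Set K)) K // a ≠ ⊥ ∧ a.FG})
        (bs : Basis (Fin n) ℤ a.1) (φ : a.1 →ₗ[ℤ] a.1),
        (∀ x : a.1, (φ x : K) = α * (x : K)) →
        ∀ M : {A : Matrix (Fin n) (Fin n) ℤ // A.charpoly = f},
          (M : Matrix (Fin n) (Fin n) ℤ) = LinearMap.toMatrix bs bs φ →
          e (Quot.mk _ a) = Quot.mk _ M := by
  classical
  let S₁ := {a : Submodule (Algebra.adjoin ℤ ({α} : Set K)) K // a ≠ ⊥ ∧ a.FG}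
  let S₂ := {A : Matrix (Fin n) (Fin n) ℤ // A.charpoly = f}
  let r₁ : S₁ → S₁ → Prop := fun a b =>
    ∃ x : K, x ≠ 0 ∧ ((b : Submodule (Algebra.adjoin ℤ ({α} : Set K)) K) : Set K) =
      (fun y => x * y) '' ((a : Submodule (Algebra.adjoin ℤ ({α} : Set K)) K) : Set K)
  let r₂ : S₂ → S₂ → Prop := fun A B =>
    ∃ U V : Matrix (Fin n) (Fin n) ℤ, U * V = 1 ∧ V * U = 1 ∧
      (B : Matrix (Fin n) (Fin n) ℤ) = U * (A : Matrix (Fin n) (Fin n) ℤ) * V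
  have hFex : ∀ a : S₁, ∃ p : S₂ × (Fin n → K),
      LMD.Eig α (p.1 : Matrix (Fin n) (Fin n) ℤ) p.2 ∧ p.2 ≠ 0 ∧
        (a : Submodule (Algebra.adjoin ℤ ({α} : Set K)) K)
          = Submodule.span (Algebra.adjoin ℤ ({α} : Set K)) (Set.range p.2) := by
    intro a
    obtain ⟨A, v, h1, h2, h3, h4⟩ := LMD.exists_eig_of_submodule f α hn hmonic hirr hroot
      hgen hdim a.1 a.2.1 a.2.2
    exact ⟨⟨⟨A, h1⟩, v⟩, h2, h3, h4⟩
  have hBex : ∀ A : S₂, ∃ v : Fin n → K,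
      LMD.Eig α (A : Matrix (Fin n) (Fin n) ℤ) v ∧ v ≠ 0 :=
    fun A => LMD.eig_exists f α hroot A.2
  have hspan_ne : ∀ v : Fin n → K, v ≠ 0 →
      Submodule.span (Algebra.adjoin ℤ ({α} : Set K)) (Set.range v) ≠ ⊥ := by
    intro v hv hbot
    apply hv
    funext i
    exact Submodule.span_eq_bot.mp hbot (v i) ⟨i, rfl⟩
  have hmapim : ∀ (x : K) (v : Fin n → K),
      ((Submodule.span (Algebra.adjoin ℤ ({α} : Set K)) (Set.range fun i => x * v i)) : Set K)
        = (fun y => x * y) ''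
          ((Submodule.span (Algebra.adjoin ℤ ({α} : Set K)) (Set.range v)) : Set K) := by
    intro x v
    have h1 : (Set.range fun i => x * v i)
        = (LinearMap.mulLeft (Algebra.adjoin ℤ ({α} : Set K)) x) '' Set.range v := by
      rw [← Set.range_comp]
      rfl
    rw [h1, ← Submodule.map_span, Submodule.map_coe]
    rfl
  let F : S₁ → S₂ := fun a => (hFex a).choose.1
  let vF : S₁ → (Fin n → K) := fun a => (hFex a).choose.2
  have hFspec : ∀ a : S₁, LMD.Eig α (F a : Matrix (Fin n) (Fin n) ℤ) (vF a) ∧ vF a ≠ 0 ∧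
      (a : Submodule (Algebra.adjoin ℤ ({α} : Set K)) K)
        = Submodule.span (Algebra.adjoin ℤ ({α} : Set K)) (Set.range (vF a)) :=
    fun a => (hFex a).choose_spec
  let vB : S₂ → (Fin n → K) := fun A => (hBex A).choose
  have hBspec : ∀ A : S₂, LMD.Eig α (A : Matrix (Fin n) (Fin n) ℤ) (vB A) ∧ vB A ≠ 0 :=
    fun A => (hBex A).choose_spec
  let B : S₂ → S₁ := fun A =>
    ⟨Submodule.span (Algebra.adjoin ℤ ({α} : Set K)) (Set.range (vB A)),
      hspan_ne _ (hBspec A).2, Submodule.fg_span (Set.finite_range _)⟩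
  have hxne : ∀ (x : K) (v w : Fin n → K), w ≠ 0 → (∀ i, w i = x * v i) → x ≠ 0 := by
    rintro x v w hw hx rfl
    apply hw
    funext i
    rw [hx i, zero_mul]
    rfl
  have hFsound : ∀ a a' : S₁, r₁ a a' → r₂ (F a) (F a') := by
    rintro a a' ⟨x, hx0, hset⟩
    obtain ⟨hE, h0, hsp⟩ := hFspec a
    obtain ⟨hE', h0', hsp'⟩ := hFspec a'
    have hEw : LMD.Eig α (F a : Matrix (Fin n) (Fin n) ℤ) (fun i => x * vF a i) :=
      LMD.eig_smul hE x
    have h0w : (fun i => x * vF a i) ≠ 0 := by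
      intro h
      apply h0
      funext i
      have h2 := congrFun h i
      simp only [Pi.zero_apply] at h2 ⊢
      rcases mul_eq_zero.mp h2 with h' | h'
      · exact absurd h' hx0
      · exact h'
    have hspw : Submodule.span (Algebra.adjoin ℤ ({α} : Set K))
          (Set.range fun i => x * vF a i)
        = Submodule.span (Algebra.adjoin ℤ ({α} : Set K)) (Set.range (vF a')) := by
      apply SetLike.coe_injective
      rw [hmapim, ← hsp']
      rw [hset, hsp]
    exact LMD.conj_of_span_eq α hgen hdim hEw hE' h0w h0' hspw
  have hBsound : ∀ A A' : S₂, r₂ A A' → r₁ (B A) (B A') := by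
    rintro A A' ⟨U, V, hUV, hVU, hAA'⟩
    obtain ⟨hEu, hu0⟩ := hBspec A
    obtain ⟨hEu', hu'0⟩ := hBspec A'
    obtain ⟨w, hEw, hw0, hwspan⟩ := LMD.eig_transport α hUV hVU hAA' hEu hu0
    obtain ⟨x, hx⟩ := LMD.eig_prop α hgen hdim hEw hEu' hw0
    refine ⟨x, hxne x w (vB A') hu'0 hx, ?_⟩
    have hr : Set.range (vB A') = Set.range (fun i => x * w i) :=
      congrArg Set.range (funext hx)
    calc ((B A' : Submodule (Algebra.adjoin ℤ ({α} : Set K)) K) : Set K)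
        = ((Submodule.span (Algebra.adjoin ℤ ({α} : Set K))
            (Set.range fun i => x * w i)) : Set K) := by
          show ((Submodule.span (Algebra.adjoin ℤ ({α} : Set K))
            (Set.range (vB A'))) : Set K) = _
          rw [hr]
      _ = (fun y => x * y) ''
          ((Submodule.span (Algebra.adjoin ℤ ({α} : Set K)) (Set.range w)) : Set K) :=
          hmapim x w
      _ = (fun y => x * y) ''
          ((B A : Submodule (Algebra.adjoin ℤ ({α} : Set K)) K) : Set K) := by
          rw [hwspan]
  have hLinv : ∀ a : S₁, r₁ (B (F a)) a := by
    intro a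
    obtain ⟨hEv, hv0, hsp⟩ := hFspec a
    obtain ⟨hEu, hu0⟩ := hBspec (F a)
    obtain ⟨x, hx⟩ := LMD.eig_prop α hgen hdim hEu hEv hu0
    refine ⟨x, hxne x (vB (F a)) (vF a) hv0 hx, ?_⟩
    have hr : Set.range (vF a) = Set.range (fun i => x * vB (F a) i) :=
      congrArg Set.range (funext hx)
    calc ((a : Submodule (Algebra.adjoin ℤ ({α} : Set K)) K) : Set K)
        = ((Submodule.span (Algebra.adjoin ℤ ({α} : Set K))
            (Set.range fun i => x * vB (F a) i)) : Set K) := by rw [hsp, hr]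
      _ = (fun y => x * y) ''
          ((B (F a) : Submodule (Algebra.adjoin ℤ ({α} : Set K)) K) : Set K) :=
          hmapim x (vB (F a))
  have hRinv : ∀ A : S₂, r₂ (F (B A)) A := by
    intro A
    obtain ⟨hEv, hv0, hsp⟩ := hFspec (B A)
    obtain ⟨hEu, hu0⟩ := hBspec A
    exact LMD.conj_of_span_eq α hgen hdim hEv hEu hv0 hu0 hsp.symm
  have hMr : ∀ (a : S₁) (bs : Basis (Fin n) ℤ a.1) (φ : a.1 →ₗ[ℤ] a.1),
      (∀ x : a.1, (φ x : K) = α * (x : K)) →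
      ∀ M : S₂, (M : Matrix (Fin n) (Fin n) ℤ) = LinearMap.toMatrix bs bs φ →
      r₂ (F a) M := by
    intro a bs φ hφ M hM
    have hEigM : LMD.Eig α (M : Matrix (Fin n) (Fin n) ℤ) (fun i => (bs i : K)) := by
      intro i
      have h1 : φ (bs i) = ∑ j, ((M : Matrix (Fin n) (Fin n) ℤ) j i) • bs j := by
        conv_lhs => rw [← bs.sum_repr (φ (bs i))]
        refine Finset.sum_congr rfl fun j _ => ?_
        rw [hM, LinearMap.toMatrix_apply]
      have h2 := congrArg Subtype.val h1
      rw [AddSubmonoidClass.coe_finset_sum] at h2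
      simp only [Submodule.coe_smul_of_tower] at h2
      calc α * (bs i : K) = ((φ (bs i) : K)) := (hφ (bs i)).symm
        _ = ∑ j, ((M : Matrix (Fin n) (Fin n) ℤ) j i : K) * (bs j : K) := by
            rw [h2]
            exact Finset.sum_congr rfl fun j _ => (LMD.intCast_mul_eq_smul _ _).symm
    have hvM0 : (fun i => (bs i : K)) ≠ 0 := LMD.basis_v_ne_zero α a.1 bs a.2.1
    obtain ⟨hEv, hv0, hsp⟩ := hFspec a
    have hsp2 : Submodule.span (Algebra.adjoin ℤ ({α} : Set K)) (Set.range (vF a))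
        = Submodule.span (Algebra.adjoin ℤ ({α} : Set K))
            (Set.range fun i => (bs i : K)) :=
      hsp.symm.trans (LMD.basis_span α a.1 bs)
    exact LMD.conj_of_span_eq α hgen hdim hEv hEigM hv0 hvM0 hsp2
  refine ⟨⟨Quot.lift (fun a => Quot.mk r₂ (F a))
            (fun a a' h => Quot.sound (hFsound a a' h)),
          Quot.lift (fun A => Quot.mk r₁ (B A))
            (fun A A' h => Quot.sound (hBsound A A' h)),
          ?_, ?_⟩, ?_⟩
  · intro q
    induction q using Quot.ind with
    | _ a => exact Quot.sound (hLinv a)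
  · intro q
    induction q using Quot.ind with
    | _ A => exact Quot.sound (hRinv A)
  · intro a bs φ hφ M hM
    exact Quot.sound (hMr a bs φ hφ M hM)
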